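/- Let (A,◁,▷) be a pre-Novikov algebra and (B,⋄,(·,·)) a finite-dimensional quadratic right Novikov algebra over a field k of characteristic 0, and let (L := A⊗B, ∘) be the induced pre-Lie algebra, i.e. (a⊗x)∘(b⊗y) = (a▷b)⊗(x⋄y) − (b◁a)⊗(y⋄x). Let r = Σ_α x_α⊗y_α ∈ A⊗A be a symmetric solution of the pre-Novikov Yang–Baxter equation in (A,◁,▷), and set α_r(a) := (L∘(a)⊗id + id⊗(L▷+R◁)(a))(τr), β_r(a) := −(L▷(a)⊗id + id⊗(L∘+R∘)(a))(r). Let {e_p} be a basis of B, {f_p} the dual basis with respect to (·,·), r_L := Σ_p Σ_α (x_α⊗e_p)⊗(y_α⊗f_p) ∈ L⊗L, and let Δ : B → B⊗B be the unique linear map with (Δ(x), y⊗z)₂ = (x, y⋄z) (where (u₁⊗u₂, y⊗z)₂ := (u₁,y)(u₂,z)). Then for all a ∈ A and x ∈ B: (L∘(a⊗x)⊗id + id⊗(L∘(a⊗x)−R∘(a⊗x)))(r_L) = β_r(a)•Δ(x) − (τα_r(a))•(τΔ(x)); that is, the pre-Lie coproduct on L obtained from r_L coincides with the one obtained from the pre-Novikov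 bialgebra structure (α_r, β_r) on A. -/

import Mathlib

open TensorProduct

noncomputable section

variable {k : Type*} [Field k]
section AlgDefs
variable {A : Type*} [AddCommGroup A] [Module k A]

/-- A pre-Lie algebra structure: `(a∘b)∘c − a∘(b∘c) = (b∘a)∘c − b∘(a∘c)`. -/
def IsPreLie (op : A →ₗ[k] A →ₗ[k] A) : Prop :=
  ∀ a b c : A, op (op a b) c - op a (op b c) = op (op b a) c - op b (op a c)

/-- A Novikov algebra: a pre-Lie algebra with `(a∘b)∘c = (a∘c)∘b`. -/
def IsNovikov (op : A →ₗ[k] A →ₗ[k] A) : Prop :=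
  IsPreLie op ∧ ∀ a b c : A, op (op a b) c = op (op a c) b

/-- A pre-Novikov algebra with operations `l = ◁` and `r = ▷`,
writing `a∘b := a◁b + a▷b`. -/
def IsPreNovikov (l r : A →ₗ[k] A →ₗ[k] A) : Prop :=
  (∀ a b c : A, r a (r b c) = r (l a b + r a b) c + r b (r a c) - r (l b a + r b a) c) ∧
  (∀ a b c : A, r a (l b c) = l (r a b) c + l b (l a c + r a c) - l (l b a) c) ∧
  (∀ a b c : A, r (l a b + r a b) c = l (r a c) b) ∧
  (∀ a b c : A, l (l a b) c = l (l a c) b)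

/-- A right Novikov algebra. -/
def IsRightNovikov (d : A →ₗ[k] A →ₗ[k] A) : Prop :=
  (∀ x y z : A, d (d x y) z - d x (d y z) = d (d x z) y - d x (d z y)) ∧
  (∀ x y z : A, d x (d y z) = d y (d x z))

/-- A right Novikov dialgebra with operations `dl = ⊣` and `dr = ⊢`. -/
def IsRightNovikovDialgebra (dl dr : A →ₗ[k] A →ₗ[k] A) : Prop :=
  (∀ x y z : A, dr x (dr y z) = dr y (dr x z)) ∧
  (∀ x y z : A, dr x (dl y z) = dl y (dl x z)) ∧
  (∀ x y z : A, dr (dr x y - dl x y) z = 0) ∧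
  (∀ x y z : A, dl x (dr y z - dl y z) = 0) ∧
  (∀ x y z : A, dr x (dr y z - dl z y) = dr (dr x y) z - dl (dr x z) y) ∧
  (∀ x y z : A, dl x (dr y z - dl z y) = dl (dl x y) z - dl (dl x z) y)

/-- A quadratic right Novikov algebra: a right Novikov algebra with a symmetric
nondegenerate bilinear form satisfying `(x⋄y,z) = −(x, y⋄z + z⋄y)`. -/
def IsQuadraticRightNovikov (d : A →ₗ[k] A →ₗ[k] A) (bf : A →ₗ[k] A →ₗ[k] k) : Prop :=
  IsRightNovikov d ∧ (∀ x y : A, bf x y = bf y x) ∧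
  (∀ x : A, (∀ y : A, bf x y = 0) → x = 0) ∧
  (∀ x y z : A, bf (d x y) z = - bf x (d y z + d z y))

/-- A quadratic pre-Lie algebra: a pre-Lie algebra with a skew-symmetric nondegenerate
bilinear form satisfying `ω(u∘v,w) = −ω(v, u∘w − w∘u)`. -/
def IsQuadraticPreLie (op : A →ₗ[k] A →ₗ[k] A) (w : A →ₗ[k] A →ₗ[k] k) : Prop :=
  IsPreLie op ∧ (∀ u v : A, w u v = - w v u) ∧
  (∀ u : A, (∀ v : A, w u v = 0) → u = 0) ∧
  (∀ u v x : A, w (op u v) x = - w v (op u x - op x u))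

end AlgDefs
section CoDefs
variable {A : Type*} [AddCommGroup A] [Module k A]

/-- `(f ⊗ id)` on `A⊗A`, landing in `A⊗(A⊗A)` via the associator. -/
def lmap3 (f : A →ₗ[k] A ⊗[k] A) : A ⊗[k] A →ₗ[k] A ⊗[k] (A ⊗[k] A) :=
  (TensorProduct.assoc k A A A).toLinearMap ∘ₗ TensorProduct.map f LinearMap.id

/-- `(id ⊗ f)` on `A⊗A`, landing in `A⊗(A⊗A)`. -/
def rmap3 (f : A →ₗ[k] A ⊗[k] A) : A ⊗[k] A →ₗ[k] A ⊗[k] (A ⊗[k] A) :=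
  TensorProduct.map LinearMap.id f

/-- `τ ⊗ id` on the triple tensor product `A⊗(A⊗A)`: `a⊗(b⊗c) ↦ b⊗(a⊗c)`. -/
def swap12 : A ⊗[k] (A ⊗[k] A) →ₗ[k] A ⊗[k] (A ⊗[k] A) :=
  (TensorProduct.assoc k A A A).toLinearMap ∘ₗ
    TensorProduct.map (TensorProduct.comm k A A).toLinearMap LinearMap.id ∘ₗ
    (TensorProduct.assoc k A A A).symm.toLinearMap

/-- `id ⊗ τ` on the triple tensor product `A⊗(A⊗A)`: `a⊗(b⊗c) ↦ a⊗(c⊗b)`. -/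
def swap23 : A ⊗[k] (A ⊗[k] A) →ₗ[k] A ⊗[k] (A ⊗[k] A) :=
  TensorProduct.map LinearMap.id (TensorProduct.comm k A A).toLinearMap

/-- The flip `τ` on `A ⊗ A`. -/
def tau2 : A ⊗[k] A →ₗ[k] A ⊗[k] A := (TensorProduct.comm k A A).toLinearMap

/-- A pre-Novikov coalgebra `(A, α, β)`. -/
def IsPreNovikovCoalgebra (α β : A →ₗ[k] A ⊗[k] A) : Prop :=
  (∀ a : A, lmap3 α (α a) + swap12 (rmap3 α (β a)) - rmap3 (α + β) (α a)
      - swap12 (lmap3 β (α a)) = 0) ∧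
  (∀ a : A, rmap3 β (β a) + swap12 (lmap3 (α + β) (β a)) - lmap3 (α + β) (β a)
      - swap12 (rmap3 β (β a)) = 0) ∧
  (∀ a : A, swap23 (lmap3 β (α a)) - lmap3 (α + β) (β a) = 0) ∧
  (∀ a : A, swap23 (lmap3 α (α a)) - lmap3 α (α a) = 0)

/-- A right Novikov co-dialgebra `(B, Δα, Δβ)` (denoted `(A, Da, Db)` here). -/
def IsRightNovikovCoDialgebra (Da Db : A →ₗ[k] A ⊗[k] A) : Prop :=
  (∀ x : A, rmap3 Db (Db x) = swap12 (rmap3 Db (Db x))) ∧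
  (∀ x : A, rmap3 Da (Db x) = swap12 (rmap3 Da (Da x))) ∧
  (∀ x : A, lmap3 Db (Db x) = lmap3 Da (Db x)) ∧
  (∀ x : A, rmap3 Db (Da x) = rmap3 Da (Da x)) ∧
  (∀ x : A, rmap3 Db (Db x) - swap23 (rmap3 Da (Db x))
      = lmap3 Db (Db x) - swap23 (lmap3 Db (Da x))) ∧
  (∀ x : A, rmap3 Db (Da x) - swap23 (rmap3 Da (Da x))
      = lmap3 Da (Da x) - swap23 (lmap3 Da (Da x)))

/-- A pre-Lie coalgebra `(L, δ)`. -/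
def IsPreLieCoalgebra (δ : A →ₗ[k] A ⊗[k] A) : Prop :=
  ∀ a : A, rmap3 δ (δ a) - swap12 (rmap3 δ (δ a)) = lmap3 δ (δ a) - swap12 (lmap3 δ (δ a))

/-- A right Novikov coalgebra `(B, Δ)`. -/
def IsRightNovikovCoalgebra (Δ : A →ₗ[k] A ⊗[k] A) : Prop :=
  (∀ x : A, lmap3 Δ (Δ x) - swap23 (lmap3 Δ (Δ x))
      = rmap3 Δ (Δ x) - swap23 (rmap3 Δ (Δ x))) ∧
  (∀ x : A, rmap3 Δ (Δ x) = swap12 (rmap3 Δ (Δ x)))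

end CoDefs
section YBE
variable {A : Type*} [AddCommGroup A] [Module k A]

/-- `(x⊗y)⊗(x'⊗y') ↦ μ(x,x') ⊗ y ⊗ y'` (the "12·13" product). -/
def m1213 (μ : A →ₗ[k] A →ₗ[k] A) :
    (A ⊗[k] A) ⊗[k] (A ⊗[k] A) →ₗ[k] A ⊗[k] (A ⊗[k] A) :=
  TensorProduct.map (TensorProduct.lift μ) LinearMap.id ∘ₗ
    (TensorProduct.tensorTensorTensorComm k A A A A).toLinearMap

/-- `(x⊗y)⊗(x'⊗y') ↦ x ⊗ μ(y,x') ⊗ y'` (the "12·23" product). -/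
def m1223 (μ : A →ₗ[k] A →ₗ[k] A) :
    (A ⊗[k] A) ⊗[k] (A ⊗[k] A) →ₗ[k] A ⊗[k] (A ⊗[k] A) :=
  TensorProduct.map LinearMap.id
      (TensorProduct.map (TensorProduct.lift μ) LinearMap.id ∘ₗ
        (TensorProduct.assoc k A A A).symm.toLinearMap) ∘ₗ
    (TensorProduct.assoc k A A (A ⊗[k] A)).toLinearMap

/-- `(x⊗y)⊗(x'⊗y') ↦ x ⊗ x' ⊗ μ(y,y')` (the "13·23" product). -/
def m1323 (μ : A →ₗ[k] A →ₗ[k] A) :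
    (A ⊗[k] A) ⊗[k] (A ⊗[k] A) →ₗ[k] A ⊗[k] (A ⊗[k] A) :=
  (TensorProduct.assoc k A A A).toLinearMap ∘ₗ
    TensorProduct.map LinearMap.id (TensorProduct.lift μ) ∘ₗ
    (TensorProduct.tensorTensorTensorComm k A A A A).toLinearMap

/-- `(x⊗y)⊗(x'⊗y') ↦ x' ⊗ x ⊗ μ(y,y')` (the "23·13" product). -/
def m2313 (μ : A →ₗ[k] A →ₗ[k] A) :
    (A ⊗[k] A) ⊗[k] (A ⊗[k] A) →ₗ[k] A ⊗[k] (A ⊗[k] A) :=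
  (TensorProduct.assoc k A A A).toLinearMap ∘ₗ
    TensorProduct.map (TensorProduct.comm k A A).toLinearMap (TensorProduct.lift μ) ∘ₗ
    (TensorProduct.tensorTensorTensorComm k A A A A).toLinearMap

/-- `ρ` is a solution of the pre-Novikov Yang–Baxter equation
`r₁₂∘r₁₃ + r₂₃⊙r₁₃ − r₁₂◁r₂₃ = 0` in the pre-Novikov algebra `(A, l, r)`,
where `a∘b = a◁b + a▷b` and `a⊙b = a▷b + b◁a`. -/
def IsPNYBESolution (l r : A →ₗ[k] A →ₗ[k] A) (ρ : A ⊗[k] A) : Prop :=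
  m1213 (l + r) (ρ ⊗ₜ[k] ρ) + m2313 (r + l.flip) (ρ ⊗ₜ[k] ρ) - m1223 l (ρ ⊗ₜ[k] ρ) = 0

/-- `ρ` is a solution of the S-equation `−r₁₂∘r₁₃ + r₁₂∘r₂₃ + [r₁₃, r₂₃] = 0`
in the pre-Lie algebra `(A, op)`. -/
def IsSEquationSolution (op : A →ₗ[k] A →ₗ[k] A) (ρ : A ⊗[k] A) : Prop :=
  - m1213 op (ρ ⊗ₜ[k] ρ) + m1223 op (ρ ⊗ₜ[k] ρ) + m1323 (op - op.flip) (ρ ⊗ₜ[k] ρ) = 0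

end YBE

set_option maxHeartbeats 2000000 in
/-- The pre-Lie coproduct on `L = A⊗B` obtained from the symmetric
S-equation solution `r_L` coincides with the one obtained from the pre-Novikov
bialgebra structure `(α_r, β_r)` induced by a symmetric p-NYBE solution `r`:
for all `a ∈ A`, `x ∈ B`,
`(L∘(a⊗x)⊗id + id⊗(L∘(a⊗x)−R∘(a⊗x)))(r_L) = β_r(a)•Δ(x) − τα_r(a)•τΔ(x)`. -/
theorem coproducts_coincide (k A B ι σ : Type*) [Field k] [CharZero k]
    [AddCommGroup A] [Module k A] [AddCommGroup B] [Module k B]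
    [Fintype ι] [DecidableEq ι] [Fintype σ]
    (l r : A →ₗ[k] A →ₗ[k] A) (hA : IsPreNovikov l r)
    (d : B →ₗ[k] B →ₗ[k] B) (bf : B →ₗ[k] B →ₗ[k] k)
    (hq : IsQuadraticRightNovikov d bf)
    (op : A ⊗[k] B →ₗ[k] A ⊗[k] B →ₗ[k] A ⊗[k] B)
    (hop : ∀ (a b : A) (x y : B),
      op (a ⊗ₜ[k] x) (b ⊗ₜ[k] y) = r a b ⊗ₜ[k] d x y - l b a ⊗ₜ[k] d y x)
    (ρ : A ⊗[k] A) (xs ys : σ → A) (hρ : ρ = ∑ i : σ, xs i ⊗ₜ[k] ys i)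
    (hsym : tau2 ρ = ρ) (hybe : IsPNYBESolution l r ρ)
    (αr βr : A →ₗ[k] A ⊗[k] A)
    (hαr : ∀ a : A, αr a = TensorProduct.map ((l + r) a) LinearMap.id (tau2 ρ)
        + TensorProduct.map LinearMap.id (r a + l.flip a) (tau2 ρ))
    (hβr : ∀ a : A, βr a = -(TensorProduct.map (r a) LinearMap.id ρ
        + TensorProduct.map LinearMap.id ((l + r) a + (l + r).flip a) ρ))
    (e : Module.Basis ι k B) (f : ι → B)
    (hdual : ∀ p q : ι, bf (e p) (f q) = if p = q then (1:k) else 0)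
    (rL : (A ⊗[k] B) ⊗[k] (A ⊗[k] B))
    (hrL : rL = ∑ p : ι, ∑ i : σ, (xs i ⊗ₜ[k] e p) ⊗ₜ[k] (ys i ⊗ₜ[k] f p))
    (Δ : B →ₗ[k] B ⊗[k] B)
    (hΔ : ∀ x y z : B,
      TensorProduct.lid k k (TensorProduct.map (bf.flip y) (bf.flip z) (Δ x))
        = bf x (d y z)) :
    ∀ (a : A) (x : B),
      TensorProduct.map (op (a ⊗ₜ[k] x)) LinearMap.id rL
          + TensorProduct.map LinearMap.id
              (op (a ⊗ₜ[k] x) - op.flip (a ⊗ₜ[k] x)) rL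
        = (TensorProduct.tensorTensorTensorComm k A A B B).toLinearMap
              (βr a ⊗ₜ[k] Δ x)
          - (TensorProduct.tensorTensorTensorComm k A A B B).toLinearMap
              (tau2 (αr a) ⊗ₜ[k] tau2 (Δ x)) := by
  obtain ⟨-, hbs, hnd, hinv⟩ := hq
  intro a x
  subst hρ hrL
  set ρ' : A ⊗[k] A := ∑ i : σ, xs i ⊗ₜ[k] ys i with hρ'
  -- dual basis facts
  have hd2 : ∀ p q : ι, bf (f p) (e q) = if q = p then (1:k) else 0 := by
    intro p q; rw [← hbs]; simp [hdual]
  have hC2 : ∀ z : B, ∑ p, bf z (e p) • f p = z := by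
    intro z
    have hq0 : ∀ q, bf (∑ p, bf z (e p) • f p - z) (e q) = 0 := by
      intro q
      simp [map_sum, LinearMap.sum_apply, LinearMap.smul_apply, hd2, smul_eq_mul,
        mul_ite, mul_one, mul_zero, Finset.sum_ite_eq]
    have h := hnd (∑ p, bf z (e p) • f p - z) ?_
    · exact sub_eq_zero.mp h
    · intro y
      conv_lhs => rw [← e.sum_repr y]
      rw [map_sum]
      simp only [map_smul, smul_eq_mul, hq0, mul_zero, Finset.sum_const_zero]
  -- invariance consequences
  have L1 : ∀ p q : ι, bf (d x (e p)) (e q)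
      = -(bf x (d (e p) (e q)) + bf x (d (e q) (e p))) := by
    intro p q
    have h := hinv x (e p) (e q)
    simp only [map_add] at h
    rw [h]
  have L2 : ∀ p q : ι, bf (d (e p) x) (e q) = bf x (d (e p) (e q)) := by
    intro p q
    have h1 := hinv (e q) (e p) x
    simp only [map_add] at h1
    have h2 := hbs (d (e p) x) (e q)
    have h3 := hbs (d (e q) (e p)) x
    have h4 := hbs (d x (e p)) (e q)
    have h5 := L1 p q
    linear_combination h2 + h1 - h3 + h4 - h5
  -- formula for Δ x
  have hspan : ∀ w : B ⊗[k] B,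
      w ∈ Submodule.span k (Set.range fun pq : ι × ι => f pq.1 ⊗ₜ[k] f pq.2) := by
    intro w
    induction w using TensorProduct.induction_on with
    | zero => exact zero_mem _
    | tmul y z =>
        rw [← hC2 y, ← hC2 z]
        simp only [TensorProduct.sum_tmul, TensorProduct.tmul_sum, Finset.smul_sum,
          TensorProduct.smul_tmul', TensorProduct.tmul_smul, smul_smul]
        refine Submodule.sum_mem _ fun p _ => Submodule.sum_mem _ fun q _ => ?_
        rw [← TensorProduct.smul_tmul']
        exact Submodule.smul_mem _ _
          (Submodule.subset_span (Set.mem_range_self (q, p)))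
    | add w1 w2 h1 h2 => exact add_mem h1 h2
  have hΔx : Δ x = ∑ p, ∑ q, bf x (d (e p) (e q)) • (f p ⊗ₜ[k] f q) := by
    have hw := hspan (Δ x - ∑ p, ∑ q, bf x (d (e p) (e q)) • (f p ⊗ₜ[k] f q))
    obtain ⟨c, hc⟩ := (Submodule.mem_span_range_iff_exists_fun k).mp hw
    have hpair : ∀ u v : ι, TensorProduct.lid k k
        (TensorProduct.map (bf.flip (e u)) (bf.flip (e v))
          (Δ x - ∑ p, ∑ q, bf x (d (e p) (e q)) • (f p ⊗ₜ[k] f q))) = 0 := by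
      intro u v
      simp only [map_sub, map_sum, map_smul, TensorProduct.map_tmul,
        LinearMap.flip_apply, hΔ, hd2, TensorProduct.lid_tmul, smul_eq_mul]
      simp [mul_ite, ite_mul, Finset.sum_ite_eq, Finset.sum_ite_eq']
    have hc0 : ∀ u v : ι, c (u, v) = 0 := by
      intro u v
      have h := hpair u v
      rw [← hc] at h
      simp only [map_sum, map_smul, TensorProduct.map_tmul, LinearMap.flip_apply,
        hd2, TensorProduct.lid_tmul, smul_eq_mul, Fintype.sum_prod_type] at h
      simpa [mul_ite, ite_mul, Finset.sum_ite_eq, Finset.sum_ite_eq'] using h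
    have : (Δ x - ∑ p, ∑ q, bf x (d (e p) (e q)) • (f p ⊗ₜ[k] f q)) = 0 := by
      rw [← hc]
      refine Finset.sum_eq_zero fun pq _ => ?_
      rw [hc0 pq.1 pq.2]
      simp
    exact sub_eq_zero.mp this
  have hτΔ : tau2 (Δ x) = ∑ p, ∑ q, bf x (d (e q) (e p)) • (f p ⊗ₜ[k] f q) := by
    rw [hΔx]
    simp only [map_sum, map_smul, tau2, LinearEquiv.coe_coe, comm_tmul]
    rw [Finset.sum_comm]
  -- the four B ⊗ B sums
  have hP1 : (∑ p, (d x (e p)) ⊗ₜ[k] f p) = -(Δ x + tau2 (Δ x)) := by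
    calc ∑ p, (d x (e p)) ⊗ₜ[k] f p
        = ∑ p, ∑ q, (-(bf x (d (e p) (e q)) + bf x (d (e q) (e p))))
            • (f q ⊗ₜ[k] f p) := by
          refine Finset.sum_congr rfl fun p _ => ?_
          conv_lhs => rw [← hC2 (d x (e p))]
          rw [TensorProduct.sum_tmul]
          exact Finset.sum_congr rfl fun q _ => by
            rw [← TensorProduct.smul_tmul', L1 p q]
      _ = ∑ p, ∑ q, (-(bf x (d (e q) (e p)) + bf x (d (e p) (e q))))
            • (f p ⊗ₜ[k] f q) := Finset.sum_comm
      _ = -(Δ x + tau2 (Δ x)) := by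
          rw [hτΔ, hΔx, ← Finset.sum_add_distrib, ← Finset.sum_neg_distrib]
          refine Finset.sum_congr rfl fun p _ => ?_
          rw [← Finset.sum_add_distrib, ← Finset.sum_neg_distrib]
          refine Finset.sum_congr rfl fun q _ => ?_
          module
  have hP2 : (∑ p, (d (e p) x) ⊗ₜ[k] f p) = tau2 (Δ x) := by
    calc ∑ p, (d (e p) x) ⊗ₜ[k] f p
        = ∑ p, ∑ q, bf x (d (e p) (e q)) • (f q ⊗ₜ[k] f p) := by
          refine Finset.sum_congr rfl fun p _ => ?_
          conv_lhs => rw [← hC2 (d (e p) x)]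
          rw [TensorProduct.sum_tmul]
          exact Finset.sum_congr rfl fun q _ => by
            rw [← TensorProduct.smul_tmul', L2 p q]
      _ = ∑ p, ∑ q, bf x (d (e q) (e p)) • (f p ⊗ₜ[k] f q) := Finset.sum_comm
      _ = tau2 (Δ x) := (hτΔ).symm
  have hSx : ∀ z : B, ∀ q' : ι, bf (d x z) (e q')
      = ∑ p, bf z (e p) * bf (d x (f p)) (e q') := by
    intro z q'
    conv_lhs => rw [← hC2 z]
    simp [map_sum, map_smul, LinearMap.sum_apply, LinearMap.smul_apply, smul_eq_mul]
  have hSx' : ∀ z : B, ∀ q' : ι, bf (d z x) (e q')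
      = ∑ p, bf z (e p) * bf (d (f p) x) (e q') := by
    intro z q'
    conv_lhs => rw [← hC2 z]
    simp [map_sum, map_smul, LinearMap.sum_apply, LinearMap.smul_apply, smul_eq_mul]
  have hP3 : (∑ p, (e p) ⊗ₜ[k] (d x (f p))) = -(Δ x + tau2 (Δ x)) := by
    calc ∑ p, (e p) ⊗ₜ[k] (d x (f p))
        = ∑ p, ∑ q, ∑ q', (bf (e p) (e q) * bf (d x (f p)) (e q'))
            • (f q ⊗ₜ[k] f q') := by
          refine Finset.sum_congr rfl fun p _ => ?_
          conv_lhs => rw [← hC2 (e p), ← hC2 (d x (f p))]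
          simp only [TensorProduct.sum_tmul, TensorProduct.tmul_sum, Finset.smul_sum,
            TensorProduct.smul_tmul', TensorProduct.tmul_smul, smul_smul]
          rw [Finset.sum_comm]
          exact Finset.sum_congr rfl fun q _ => Finset.sum_congr rfl fun q' _ => by
            rw [mul_comm]
      _ = ∑ q, ∑ q', (∑ p, bf (e p) (e q) * bf (d x (f p)) (e q'))
            • (f q ⊗ₜ[k] f q') := by
          rw [Finset.sum_comm]
          refine Finset.sum_congr rfl fun q _ => ?_
          rw [Finset.sum_comm]
          exact Finset.sum_congr rfl fun q' _ => (Finset.sum_smul).symm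
      _ = ∑ q, ∑ q', (-(bf x (d (e q) (e q')) + bf x (d (e q') (e q))))
            • (f q ⊗ₜ[k] f q') := by
          refine Finset.sum_congr rfl fun q _ => Finset.sum_congr rfl fun q' _ => ?_
          congr 1
          rw [← L1 q q', hSx (e q) q']
          exact Finset.sum_congr rfl fun p _ => by rw [hbs (e p) (e q)]
      _ = -(Δ x + tau2 (Δ x)) := by
          rw [hτΔ, hΔx, ← Finset.sum_add_distrib, ← Finset.sum_neg_distrib]
          refine Finset.sum_congr rfl fun p _ => ?_
          rw [← Finset.sum_add_distrib, ← Finset.sum_neg_distrib]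
          refine Finset.sum_congr rfl fun q _ => ?_
          module
  have hP4 : (∑ p, (e p) ⊗ₜ[k] (d (f p) x)) = Δ x := by
    calc ∑ p, (e p) ⊗ₜ[k] (d (f p) x)
        = ∑ p, ∑ q, ∑ q', (bf (e p) (e q) * bf (d (f p) x) (e q'))
            • (f q ⊗ₜ[k] f q') := by
          refine Finset.sum_congr rfl fun p _ => ?_
          conv_lhs => rw [← hC2 (e p), ← hC2 (d (f p) x)]
          simp only [TensorProduct.sum_tmul, TensorProduct.tmul_sum, Finset.smul_sum,
            TensorProduct.smul_tmul', TensorProduct.tmul_smul, smul_smul]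
          rw [Finset.sum_comm]
          exact Finset.sum_congr rfl fun q _ => Finset.sum_congr rfl fun q' _ => by
            rw [mul_comm]
      _ = ∑ q, ∑ q', (∑ p, bf (e p) (e q) * bf (d (f p) x) (e q'))
            • (f q ⊗ₜ[k] f q') := by
          rw [Finset.sum_comm]
          refine Finset.sum_congr rfl fun q _ => ?_
          rw [Finset.sum_comm]
          exact Finset.sum_congr rfl fun q' _ => (Finset.sum_smul).symm
      _ = ∑ q, ∑ q', bf x (d (e q) (e q')) • (f q ⊗ₜ[k] f q') := by
          refine Finset.sum_congr rfl fun q _ => Finset.sum_congr rfl fun q' _ => ?_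
          congr 1
          rw [← L2 q q', hSx' (e q) q']
          exact Finset.sum_congr rfl fun p _ => by rw [hbs (e p) (e q)]
      _ = Δ x := (hΔx).symm
  -- A ⊗ A coefficients
  set u1 : A ⊗[k] A := TensorProduct.map (r a) LinearMap.id ρ' with hu1
  set u2 : A ⊗[k] A := TensorProduct.map (l.flip a) LinearMap.id ρ' with hu2
  set u3 : A ⊗[k] A := TensorProduct.map LinearMap.id (l a + r a) ρ' with hu3
  set u4 : A ⊗[k] A := TensorProduct.map LinearMap.id (l.flip a + r.flip a) ρ' with hu4
  have hβ : βr a = -(u1 + (u3 + u4)) := by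
    rw [hβr a]
    have : ((l + r) a + (l + r).flip a) = (l a + r a) + (l.flip a + r.flip a) := by
      ext b; simp [add_comm, add_left_comm]
    rw [this, TensorProduct.map_add_right, LinearMap.add_apply]
  have htm : ∀ (F G : A →ₗ[k] A) (w : A ⊗[k] A), tau2 (TensorProduct.map F G w)
      = TensorProduct.map G F (tau2 w) := by
    intro F G w
    induction w using TensorProduct.induction_on with
    | zero => simp
    | tmul => simp [tau2]
    | add _ _ h1 h2 => simp [map_add, h1, h2]
  have hτα : tau2 (αr a) = u1 + u2 + u3 := by
    rw [hαr a, hsym, map_add, htm, htm, hsym]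
    have h1 : ((l + r) a) = l a + r a := rfl
    rw [h1, TensorProduct.map_add_left, TensorProduct.map_add_right]
    simp only [LinearMap.add_apply]
    rw [hu3, TensorProduct.map_add_right]
    simp only [LinearMap.add_apply]
    abel
  -- the key identity in (A⊗A)⊗(B⊗B)
  have KEY : u1 ⊗ₜ[k] (∑ p, (d x (e p)) ⊗ₜ[k] f p)
        - u2 ⊗ₜ[k] (∑ p, (d (e p) x) ⊗ₜ[k] f p)
        + u3 ⊗ₜ[k] (∑ p, (e p) ⊗ₜ[k] (d x (f p)))
        - u4 ⊗ₜ[k] (∑ p, (e p) ⊗ₜ[k] (d (f p) x))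
      = βr a ⊗ₜ[k] Δ x - tau2 (αr a) ⊗ₜ[k] tau2 (Δ x) := by
    rw [hP1, hP2, hP3, hP4, hβ, hτα]
    simp only [TensorProduct.tmul_add, TensorProduct.tmul_neg, TensorProduct.add_tmul,
      TensorProduct.neg_tmul]
    abel
  -- convert the goal
  have hL1 : TensorProduct.map (op (a ⊗ₜ[k] x)) LinearMap.id
        (∑ p : ι, ∑ i : σ, (xs i ⊗ₜ[k] e p) ⊗ₜ[k] (ys i ⊗ₜ[k] f p))
      = (TensorProduct.tensorTensorTensorComm k A A B B).toLinearMap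
          (u1 ⊗ₜ[k] (∑ p, (d x (e p)) ⊗ₜ[k] f p))
        - (TensorProduct.tensorTensorTensorComm k A A B B).toLinearMap
          (u2 ⊗ₜ[k] (∑ p, (d (e p) x) ⊗ₜ[k] f p)) := by
    have hR1 : (TensorProduct.tensorTensorTensorComm k A A B B).toLinearMap
          (u1 ⊗ₜ[k] (∑ p, (d x (e p)) ⊗ₜ[k] f p))
        = ∑ p : ι, ∑ i : σ, (r a (xs i) ⊗ₜ[k] d x (e p)) ⊗ₜ[k] (ys i ⊗ₜ[k] f p) := by
      simp only [hu1, hρ', map_sum, TensorProduct.map_tmul, LinearMap.id_coe, id_eq,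
        TensorProduct.sum_tmul, TensorProduct.tmul_sum, LinearEquiv.coe_coe,
        TensorProduct.tensorTensorTensorComm_tmul]
    have hR2 : (TensorProduct.tensorTensorTensorComm k A A B B).toLinearMap
          (u2 ⊗ₜ[k] (∑ p, (d (e p) x) ⊗ₜ[k] f p))
        = ∑ p : ι, ∑ i : σ, (l (xs i) a ⊗ₜ[k] d (e p) x) ⊗ₜ[k] (ys i ⊗ₜ[k] f p) := by
      simp only [hu2, hρ', map_sum, TensorProduct.map_tmul, LinearMap.id_coe, id_eq,
        LinearMap.flip_apply, TensorProduct.sum_tmul, TensorProduct.tmul_sum,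
        LinearEquiv.coe_coe, TensorProduct.tensorTensorTensorComm_tmul]
    rw [hR1, hR2]
    simp only [← Finset.sum_sub_distrib]
    simp only [map_sum, TensorProduct.map_tmul, hop, LinearMap.id_coe, id_eq,
      TensorProduct.sub_tmul]
  have hL2 : TensorProduct.map LinearMap.id (op (a ⊗ₜ[k] x) - op.flip (a ⊗ₜ[k] x))
        (∑ p : ι, ∑ i : σ, (xs i ⊗ₜ[k] e p) ⊗ₜ[k] (ys i ⊗ₜ[k] f p))
      = (TensorProduct.tensorTensorTensorComm k A A B B).toLinearMap
          (u3 ⊗ₜ[k] (∑ p, (e p) ⊗ₜ[k] (d x (f p))))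
        - (TensorProduct.tensorTensorTensorComm k A A B B).toLinearMap
          (u4 ⊗ₜ[k] (∑ p, (e p) ⊗ₜ[k] (d (f p) x))) := by
    have hR3 : (TensorProduct.tensorTensorTensorComm k A A B B).toLinearMap
          (u3 ⊗ₜ[k] (∑ p, (e p) ⊗ₜ[k] (d x (f p))))
        = ∑ p : ι, ∑ i : σ, (xs i ⊗ₜ[k] e p)
            ⊗ₜ[k] ((l a (ys i) + r a (ys i)) ⊗ₜ[k] d x (f p)) := by
      simp only [hu3, hρ', map_sum, TensorProduct.map_tmul, LinearMap.id_coe, id_eq,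
        LinearMap.add_apply, TensorProduct.sum_tmul, TensorProduct.tmul_sum,
        LinearEquiv.coe_coe, TensorProduct.tensorTensorTensorComm_tmul]
    have hR4 : (TensorProduct.tensorTensorTensorComm k A A B B).toLinearMap
          (u4 ⊗ₜ[k] (∑ p, (e p) ⊗ₜ[k] (d (f p) x)))
        = ∑ p : ι, ∑ i : σ, (xs i ⊗ₜ[k] e p)
            ⊗ₜ[k] ((l (ys i) a + r (ys i) a) ⊗ₜ[k] d (f p) x) := by
      simp only [hu4, hρ', map_sum, TensorProduct.map_tmul, LinearMap.id_coe, id_eq,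
        LinearMap.add_apply, LinearMap.flip_apply, TensorProduct.sum_tmul,
        TensorProduct.tmul_sum, LinearEquiv.coe_coe,
        TensorProduct.tensorTensorTensorComm_tmul]
    rw [hR3, hR4]
    simp only [← Finset.sum_sub_distrib]
    simp only [map_sum, TensorProduct.map_tmul, LinearMap.id_coe, id_eq,
      LinearMap.sub_apply, LinearMap.flip_apply, hop]
    refine Finset.sum_congr rfl fun p _ => Finset.sum_congr rfl fun i _ => ?_
    simp only [TensorProduct.tmul_sub, TensorProduct.tmul_add,
      TensorProduct.add_tmul, TensorProduct.sub_tmul]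
    abel
  rw [hL1, hL2, ← map_sub, ← map_sub, ← map_add, ← map_sub]
  rw [show u1 ⊗ₜ[k] (∑ p, (d x (e p)) ⊗ₜ[k] f p)
        - u2 ⊗ₜ[k] (∑ p, (d (e p) x) ⊗ₜ[k] f p)
        + (u3 ⊗ₜ[k] (∑ p, (e p) ⊗ₜ[k] (d x (f p)))
        - u4 ⊗ₜ[k] (∑ p, (e p) ⊗ₜ[k] (d (f p) x)))
      = u1 ⊗ₜ[k] (∑ p, (d x (e p)) ⊗ₜ[k] f p)
        - u2 ⊗ₜ[k] (∑ p, (d (e p) x) ⊗ₜ[k] f p)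
        + u3 ⊗ₜ[k] (∑ p, (e p) ⊗ₜ[k] (d x (f p)))
        - u4 ⊗ₜ[k] (∑ p, (e p) ⊗ₜ[k] (d (f p) x)) from by abel]
  rw [KEY, map_sub]
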